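/- Let n be a positive integer and let a, b be integers with 0 ≤ a ≤ n and 0 ≤ b ≤ n. There exists an orientation of the n-cube in which every vertex has in-degree equal to a or equal to b if and only if there exist non-negative integers s and t such that s + t = 2^n and a·s + b·t = n·2^(n-1). -/

import Mathlib

/-- Flip coordinate `i` of a binary `n`-tuple. -/
def flipBit {n : ℕ} (v : Fin n → ZMod 2) (i : Fin n) : Fin n → ZMod 2 :=
  Function.update v i (v i + 1)

/-- An orientation of the `n`-cube: to each edge (a pair of vertices differing in
exactly one coordinate) we assign a head, one of its two endpoints.  The edge at
vertex `v` in direction `i` joins `v` and `flipBit v i`; `head v i` is the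
assigned head of that edge, which must be one of the endpoints and must not
depend on from which endpoint the edge is viewed. -/
structure CubeOrientation (n : ℕ) where
  head : (Fin n → ZMod 2) → Fin n → (Fin n → ZMod 2)
  head_mem : ∀ v i, head v i = v ∨ head v i = flipBit v i
  compatible : ∀ v i, head (flipBit v i) i = head v i

/-- The in-degree of a vertex `v`: the number of edges incident to `v`
whose head is `v`. -/
def CubeOrientation.inDeg {n : ℕ} (o : CubeOrientation n) (v : Fin n → ZMod 2) : ℕ :=
  (Finset.univ.filter fun i : Fin n => o.head v i = v).card

namespace HyperAux
set_option linter.unusedSectionVars false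

open Finset Function

attribute [local instance 0] Classical.propDecidable
set_option maxHeartbeats 1000000

/-! ### Generic `ZMod 2` facts -/

lemma z2_add_one_ne : ∀ x : ZMod 2, ¬ (x + 1 = x) := by decide

lemma z2_cases : ∀ x y : ZMod 2, x = y ∨ x = y + 1 := by decide

lemma z2_add_add (x : ZMod 2) : x + 1 + 1 = x := by
  revert x; decide

lemma z2_zero_or_one : ∀ x : ZMod 2, x = 0 ∨ x = 1 := by decide

/-! ### Generic flips on an arbitrary index type -/

/-- Flip coordinate `i` (generic index type). -/
def flipG {ι : Type} [DecidableEq ι] (v : ι → ZMod 2) (i : ι) : ι → ZMod 2 :=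
  Function.update v i (v i + 1)

lemma flipBit_eq_flipG {n : ℕ} (v : Fin n → ZMod 2) (i : Fin n) :
    flipBit v i = flipG v i := rfl

section flipG

variable {ι : Type} [DecidableEq ι]

@[simp] lemma flipG_apply_same (v : ι → ZMod 2) (i : ι) : flipG v i i = v i + 1 := by
  simp [flipG]

lemma flipG_apply_ne (v : ι → ZMod 2) {i j : ι} (h : j ≠ i) : flipG v i j = v j := by
  simp [flipG, Function.update_apply, h]

@[simp] lemma flipG_flipG (v : ι → ZMod 2) (i : ι) : flipG (flipG v i) i = v := by
  funext j
  by_cases h : j = i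
  · subst h; simp [z2_add_add]
  · rw [flipG_apply_ne _ h, flipG_apply_ne _ h]

lemma flipG_ne (v : ι → ZMod 2) (i : ι) : flipG v i ≠ v := by
  intro h
  exact z2_add_one_ne (v i) (by simpa using congrFun h i)

end flipG

/-! ### Building an orientation from an edge-choice function μ -/

/-- Build a cube orientation from `μ` assigning to each (vertex, direction) the
value of coordinate `i` of the head, provided `μ` is edge-consistent. -/
def mkO {n : ℕ} (μ : Fin n → (Fin n → ZMod 2) → ZMod 2)
    (hμ : ∀ i v, μ i (flipBit v i) = μ i v) : CubeOrientation n where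
  head v i := Function.update v i (μ i v)
  head_mem v i := by
    rcases z2_cases (μ i v) (v i) with h | h
    · left; show Function.update v i (μ i v) = v
      rw [h, Function.update_eq_self]
    · right; show Function.update v i (μ i v) = flipBit v i
      rw [h]; rfl
  compatible v i := by
    show Function.update (flipBit v i) i (μ i (flipBit v i)) = Function.update v i (μ i v)
    rw [hμ]
    show Function.update (Function.update v i (v i + 1)) i (μ i v) = _
    rw [Function.update_idem]

lemma update_eq_self_iff' {n : ℕ} (v : Fin n → ZMod 2) (i : Fin n) (x : ZMod 2) :
    Function.update v i x = v ↔ x = v i := by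
  constructor
  · intro h; have := congrFun h i; simpa using this
  · intro h; rw [h, Function.update_eq_self]

lemma mkO_inDeg {n : ℕ} (μ : Fin n → (Fin n → ZMod 2) → ZMod 2)
    (hμ : ∀ i v, μ i (flipBit v i) = μ i v) (v : Fin n → ZMod 2) :
    (mkO μ hμ).inDeg v = (Finset.univ.filter fun i => μ i v = v i).card := by
  unfold CubeOrientation.inDeg
  show (Finset.univ.filter fun i => Function.update v i (μ i v) = v).card = _
  have h : ∀ i : Fin n, (Function.update v i (μ i v) = v) ↔ (μ i v = v i) :=
    fun i => update_eq_self_iff' v i (μ i v)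
  apply Finset.card_nbij (fun i => i)
  · intro i hi
    simp only [Finset.mem_coe, Finset.mem_filter] at hi ⊢
    exact ⟨hi.1, (h i).mp hi.2⟩
  · exact fun x _ y _ hxy => hxy
  · intro i hi
    simp only [Finset.mem_coe, Finset.mem_filter] at hi ⊢
    exact ⟨i, Finset.mem_coe.mpr (Finset.mem_filter.mpr ⟨hi.1, (h i).mpr hi.2⟩), rfl⟩

/-! ### Complementing an orientation -/

/-- Reverse every edge of an orientation. -/
def complO {n : ℕ} (o : CubeOrientation n) : CubeOrientation n where
  head v i := if o.head v i = v then flipBit v i else v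
  head_mem v i := by
    by_cases h : o.head v i = v
    · right
      show (if o.head v i = v then flipBit v i else v) = flipBit v i
      rw [if_pos h]
    · left
      show (if o.head v i = v then flipBit v i else v) = v
      rw [if_neg h]
  compatible v i := by
    have hc := o.compatible v i
    show (if o.head (flipBit v i) i = flipBit v i then flipBit (flipBit v i) i else flipBit v i)
      = (if o.head v i = v then flipBit v i else v)
    by_cases h : o.head v i = v
    · have h2 : ¬ (o.head (flipBit v i) i = flipBit v i) := by
        rw [hc, h]
        intro h3
        exact flipG_ne v i h3.symm
      rw [if_neg h2, if_pos h]
    · have h2 : o.head (flipBit v i) i = flipBit v i := by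
        rcases o.head_mem v i with h' | h'
        · exact absurd h' h
        · rw [hc, h']
      rw [if_pos h2, if_neg h, flipBit_eq_flipG, flipBit_eq_flipG, flipG_flipG]

lemma complO_inDeg {n : ℕ} (o : CubeOrientation n) (v : Fin n → ZMod 2) :
    (complO o).inDeg v = n - o.inDeg v := by
  have key : ∀ i : Fin n, ((complO o).head v i = v) ↔ ¬ (o.head v i = v) := by
    intro i
    show (if o.head v i = v then flipBit v i else v) = v ↔ _
    by_cases h : o.head v i = v
    · rw [if_pos h]
      constructor
      · intro h2; exact absurd h2 (flipG_ne v i)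
      · intro h2; exact absurd h h2
    · rw [if_neg h]
      exact ⟨fun _ => h, fun _ => rfl⟩
  unfold CubeOrientation.inDeg
  have h1 : (Finset.univ.filter fun i => (complO o).head v i = v) =
      (Finset.univ.filter fun i => ¬ (o.head v i = v)) := by
    ext i; simp only [Finset.mem_filter, key]
  rw [h1]
  have h2 := Finset.card_filter_add_card_filter_not
    (s := (Finset.univ : Finset (Fin n))) (fun i => o.head v i = v)
  simp only [Finset.card_univ, Fintype.card_fin] at h2
  omega

/-! ### Pre-orientations on an arbitrary index type -/

variable {ι κ : Type} [Fintype ι] [DecidableEq ι] [Fintype κ] [DecidableEq κ]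

/-- Orientation data on an abstract finite index type. -/
structure Pre (ι : Type) [Fintype ι] [DecidableEq ι] where
  μ : ι → (ι → ZMod 2) → ZMod 2
  inv : ∀ i v, μ i (flipG v i) = μ i v

/-- Generalized in-degree. -/
def Pre.deg (P : Pre ι) (v : ι → ZMod 2) : ℕ :=
  (Finset.univ.filter fun i => P.μ i v = v i).card

lemma update_comp_inl (v : ι ⊕ κ → ZMod 2) (i : ι) (x : ZMod 2) :
    (Function.update v (Sum.inl i) x) ∘ Sum.inl = Function.update (v ∘ Sum.inl) i x :=
  Function.update_comp_eq_of_injective v Sum.inl_injective i x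

lemma update_comp_inr (v : ι ⊕ κ → ZMod 2) (j : κ) (x : ZMod 2) :
    (Function.update v (Sum.inr j) x) ∘ Sum.inr = Function.update (v ∘ Sum.inr) j x :=
  Function.update_comp_eq_of_injective v Sum.inr_injective j x

lemma update_comp_inl_inr (v : ι ⊕ κ → ZMod 2) (j : κ) (x : ZMod 2) :
    (Function.update v (Sum.inr j) x) ∘ Sum.inl = v ∘ Sum.inl := by
  funext i
  simp [Function.update_apply]

lemma update_comp_inr_inl (v : ι ⊕ κ → ZMod 2) (i : ι) (x : ZMod 2) :
    (Function.update v (Sum.inl i) x) ∘ Sum.inr = v ∘ Sum.inr := by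
  funext j
  simp [Function.update_apply]

/-- Disjoint sum of two pre-orientations. -/
def Pre.sum (P : Pre ι) (Q : Pre κ) : Pre (ι ⊕ κ) where
  μ := fun x v => match x with
    | Sum.inl i => P.μ i (v ∘ Sum.inl)
    | Sum.inr j => Q.μ j (v ∘ Sum.inr)
  inv := by
    intro x v
    cases x with
    | inl i =>
      show P.μ i ((flipG v (Sum.inl i)) ∘ Sum.inl) = P.μ i (v ∘ Sum.inl)
      have : (flipG v (Sum.inl i)) ∘ Sum.inl = flipG (v ∘ Sum.inl) i := by
        unfold flipG
        rw [update_comp_inl]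
        rfl
      rw [this, P.inv]
    | inr j =>
      show Q.μ j ((flipG v (Sum.inr j)) ∘ Sum.inr) = Q.μ j (v ∘ Sum.inr)
      have : (flipG v (Sum.inr j)) ∘ Sum.inr = flipG (v ∘ Sum.inr) j := by
        unfold flipG
        rw [update_comp_inr]
        rfl
      rw [this, Q.inv]

/-- Cardinality of a filter over a sum type. -/
lemma card_filter_sumType (p : ι ⊕ κ → Prop) [DecidablePred p]
    [DecidablePred fun i => p (Sum.inl i)] [DecidablePred fun j => p (Sum.inr j)] :
    (Finset.univ.filter p).card =
      (Finset.univ.filter fun i => p (Sum.inl i)).card +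
      (Finset.univ.filter fun j => p (Sum.inr j)).card := by
  have hL : (Finset.univ.filter p).toLeft = Finset.univ.filter (fun i => p (Sum.inl i)) := by
    ext i; simp
  have hR : (Finset.univ.filter p).toRight = Finset.univ.filter (fun j => p (Sum.inr j)) := by
    ext j; simp
  rw [← Finset.card_toLeft_add_card_toRight (u := Finset.univ.filter p), hL, hR]

lemma Pre.sum_deg (P : Pre ι) (Q : Pre κ) (v : ι ⊕ κ → ZMod 2) :
    (P.sum Q).deg v = P.deg (v ∘ Sum.inl) + Q.deg (v ∘ Sum.inr) := by
  unfold Pre.deg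
  rw [card_filter_sumType (fun x => (P.sum Q).μ x v = v x)]
  rfl

/-- Transfer a pre-orientation along an equivalence of index types. -/
def Pre.toCube {n : ℕ} (P : Pre ι) (φ : Fin n ≃ ι) : CubeOrientation n :=
  mkO (fun i v => P.μ (φ i) (v ∘ φ.symm))
    (by
      intro i v
      show P.μ (φ i) ((flipBit v i) ∘ ⇑φ.symm) = P.μ (φ i) (v ∘ ⇑φ.symm)
      have h : (flipBit v i) ∘ ⇑φ.symm = flipG (v ∘ ⇑φ.symm) (φ i) := by
        show (Function.update v i (v i + 1)) ∘ ⇑φ.symm = _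
        have hi : i = φ.symm (φ i) := by simp
        unfold flipG
        rw [hi]
        rw [Function.update_comp_eq_of_injective v φ.symm.injective (φ i)]
        simp
      rw [h, P.inv])

lemma Pre.toCube_inDeg {n : ℕ} (P : Pre ι) (φ : Fin n ≃ ι) (v : Fin n → ZMod 2) :
    (P.toCube φ).inDeg v = P.deg (v ∘ φ.symm) := by
  unfold Pre.toCube
  rw [mkO_inDeg]
  unfold Pre.deg
  apply Finset.card_nbij (fun i => φ i)
  · intro i hi
    simp only [Finset.mem_coe, Finset.mem_filter] at hi ⊢
    refine ⟨Finset.mem_univ _, ?_⟩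
    have : (v ∘ ⇑φ.symm) (φ i) = v i := by simp
    rw [this]
    exact hi.2
  · exact fun x _ y _ hxy => φ.injective hxy
  · intro j hj
    simp only [Finset.mem_coe, Finset.mem_filter] at hj ⊢
    refine ⟨φ.symm j, Finset.mem_coe.mpr (Finset.mem_filter.mpr ⟨Finset.mem_univ _, ?_⟩), by simp⟩
    have h1 : φ (φ.symm j) = j := by simp
    rw [h1]
    have : (v ∘ ⇑φ.symm) j = v (φ.symm j) := rfl
    rw [← this]
    exact hj.2

/-! ### The constant component: on `Fin q ⊕ Fin q`, all in-degrees equal `q` -/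

section constComp

variable {q : ℕ}

/-- signs for the constant component -/
def epsC (q : ℕ) : Fin q ⊕ Fin q → ZMod 2 := Sum.elim (fun _ => 0) (fun _ => 1)

lemma z2_shift : ∀ s e x : ZMod 2, (s + e = x) ↔ (e = x + s) := by decide

/-- Constant pre-orientation. -/
def constPre (q : ℕ) : Pre (Fin q ⊕ Fin q) where
  μ i v := (∑ j ∈ Finset.univ.erase i, v j) + epsC q i
  inv := by
    intro i v
    show (∑ j ∈ Finset.univ.erase i, (flipG v i) j) + epsC q i
      = (∑ j ∈ Finset.univ.erase i, v j) + epsC q i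
    have h : ∑ j ∈ Finset.univ.erase i, (flipG v i) j = ∑ j ∈ Finset.univ.erase i, v j := by
      apply Finset.sum_congr rfl
      intro j hj
      exact flipG_apply_ne v (Finset.ne_of_mem_erase hj)
    rw [h]

lemma constPre_deg (q : ℕ) (v : Fin q ⊕ Fin q → ZMod 2) : (constPre q).deg v = q := by
  unfold Pre.deg constPre
  have hcond : ∀ i, ((∑ j ∈ Finset.univ.erase i, v j) + epsC q i = v i) ↔
      (epsC q i = ∑ j, v j) := by
    intro i
    rw [z2_shift]
    have : v i + ∑ j ∈ Finset.univ.erase i, v j = ∑ j, v j :=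
      Finset.add_sum_erase _ v (Finset.mem_univ i)
    rw [← this]
  have h1 : (Finset.univ.filter fun i => (∑ j ∈ Finset.univ.erase i, v j) + epsC q i = v i)
      = (Finset.univ.filter fun i => epsC q i = ∑ j, v j) := by
    ext i
    simp only [Finset.mem_filter, hcond]
  rw [h1]
  rw [card_filter_sumType (fun i => epsC q i = ∑ j, v j)]
  rcases z2_zero_or_one (∑ j, v j) with h | h <;> rw [h] <;>
    simp [epsC, Finset.filter_true_of_mem, Finset.filter_false_of_mem]

end constComp

/-! ### The boundary component -/

section boundary

variable (e m k : ℕ)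

/-- Nonzero syndrome vectors, indexing the "code block" coordinates. -/
abbrev NZ (e : ℕ) := {f : Fin e → ZMod 2 // f ≠ 0}

/-- The index type of the base boundary cube. -/
abbrev Gam (e k : ℕ) := NZ e ⊕ Fin (k + 1)

/-- The blown-up index type. -/
abbrev BI (e m k : ℕ) := Gam e k × Fin m

/-- Parity of a vertex of the base cube. -/
def pr (v : Gam e k → ZMod 2) : ZMod 2 := ∑ γ, v γ

/-- Syndrome of a vertex. -/
def syn (v : Gam e k → ZMod 2) : Fin e → ZMod 2 :=
  ∑ f : NZ e, v (Sum.inl f) • (f : Fin e → ZMod 2)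

/-- Is the coordinate in the "receiving" block? -/
def isYZ : Gam e k → Prop := fun γ => match γ with
  | Sum.inl _ => False
  | Sum.inr j => j ≠ 0

variable (S : Finset (Fin e → ZMod 2))

/-- Membership in the distinguished vertex class `X`. -/
def isX (v : Gam e k → ZMod 2) : Prop := pr e k v = 0 ∧ syn e k v ∈ S

/-- Head-indicator: `chi v γ` holds iff `v` is the head of the edge at `v`
in direction `γ`. -/
def chi (v : Gam e k → ZMod 2) (γ : Gam e k) : Prop :=
  if pr e k v = 0 then (¬ isX e k S v ∨ isYZ e k γ)
  else (isX e k S (flipG v γ) ∧ ¬ isYZ e k γ)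

lemma z2_eq_add_one (x : ZMod 2) : x = 0 → x + 1 ≠ 0 := by
  revert x; decide

lemma pr_flip (v : Gam e k → ZMod 2) (γ : Gam e k) :
    pr e k (flipG v γ) = pr e k v + 1 := by
  unfold pr flipG
  rw [Finset.sum_update_of_mem (Finset.mem_univ γ)]
  have h2 : ∑ x ∈ Finset.univ \ {γ}, v x = ∑ x ∈ Finset.univ.erase γ, v x := by
    rw [Finset.erase_eq]
  have h3 : v γ + ∑ x ∈ Finset.univ.erase γ, v x = ∑ x, v x :=
    Finset.add_sum_erase _ v (Finset.mem_univ γ)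
  rw [h2, ← h3]
  ring

lemma z2v_add_eq_zero (a b : Fin e → ZMod 2) : a + b = 0 ↔ a = b := by
  constructor
  · intro h; funext x
    have := congrFun h x
    revert this
    have : ∀ p r : ZMod 2, p + r = 0 → p = r := by decide
    exact fun h2 => this _ _ h2
  · intro h; subst h; funext x
    have : ∀ p : ZMod 2, p + p = 0 := by decide
    exact this _

lemma syn_flip_inl (v : Gam e k → ZMod 2) (f : NZ e) :
    syn e k (flipG v (Sum.inl f)) = syn e k v + (f : Fin e → ZMod 2) := by
  unfold syn flipG
  have hcomp : ∀ f' : NZ e,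
      Function.update v (Sum.inl f) (v (Sum.inl f) + 1) (Sum.inl f')
        = Function.update (fun f'' : NZ e => v (Sum.inl f'')) f (v (Sum.inl f) + 1) f' := by
    intro f'
    exact congrFun (Function.update_comp_eq_of_injective v Sum.inl_injective f _) f'
  have hfun : (fun f' : NZ e =>
      Function.update v (Sum.inl f) (v (Sum.inl f) + 1) (Sum.inl f') • (f' : Fin e → ZMod 2))
      = Function.update (fun f' : NZ e => v (Sum.inl f') • (f' : Fin e → ZMod 2)) f
          ((v (Sum.inl f) + 1) • (f : Fin e → ZMod 2)) := by
    funext f'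
    by_cases hf : f' = f
    · subst hf
      rw [hcomp f', Function.update_self, Function.update_self]
    · rw [hcomp f', Function.update_of_ne hf, Function.update_of_ne hf]
  rw [hfun, Finset.sum_update_of_mem (Finset.mem_univ f)]
  have h2 : ∑ x ∈ Finset.univ \ {f}, v (Sum.inl x) • (x : Fin e → ZMod 2)
      = ∑ x ∈ Finset.univ.erase f, v (Sum.inl x) • (x : Fin e → ZMod 2) := by
    rw [Finset.erase_eq]
  have h3 : v (Sum.inl f) • (f : Fin e → ZMod 2)
        + ∑ x ∈ Finset.univ.erase f, v (Sum.inl x) • (x : Fin e → ZMod 2)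
      = ∑ x, v (Sum.inl x) • (x : Fin e → ZMod 2) :=
    Finset.add_sum_erase Finset.univ (fun x : NZ e => v (Sum.inl x) • (x : Fin e → ZMod 2))
      (Finset.mem_univ f)
  rw [h2, ← h3, add_smul, one_smul]
  ring

lemma syn_flip_inr (v : Gam e k → ZMod 2) (j : Fin (k + 1)) :
    syn e k (flipG v (Sum.inr j)) = syn e k v := by
  unfold syn flipG
  apply Finset.sum_congr rfl
  intro f _
  have : Function.update v (Sum.inr j) (v (Sum.inr j) + 1) (Sum.inl f) = v (Sum.inl f) := by
    simp [Function.update_apply]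
  rw [this]

lemma chi_flip (v : Gam e k → ZMod 2) (γ : Gam e k) :
    chi e k S (flipG v γ) γ ↔ ¬ chi e k S v γ := by
  unfold chi
  rcases z2_zero_or_one (pr e k v) with hp | hp
  · have hp' : pr e k (flipG v γ) ≠ 0 := by
      rw [pr_flip, hp]; decide
    rw [if_neg hp', if_pos hp, flipG_flipG]
    by_cases hx : isX e k S v <;> by_cases hyz : isYZ e k γ <;> tauto
  · have hp0 : ¬ (pr e k v = 0) := by rw [hp]; decide
    have hp' : pr e k (flipG v γ) = 0 := by
      rw [pr_flip, hp]; decide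
    rw [if_pos hp', if_neg hp0]
    by_cases hx : isX e k S (flipG v γ) <;> by_cases hyz : isYZ e k γ <;> tauto

lemma card_gam : Fintype.card (Gam e k) = 2 ^ e + k := by
  have h1 : Fintype.card (NZ e) = 2 ^ e - 1 := by
    simp [Fintype.card_subtype_compl, Fintype.card_fun]
  have h2 : Fintype.card (Gam e k) = Fintype.card (NZ e) + Fintype.card (Fin (k + 1)) := by
    simp
  have := Nat.one_le_two_pow (n := e)
  rw [h2, h1, Fintype.card_fin]
  omega

lemma card_isYZ : (Finset.univ.filter (isYZ e k)).card = k := by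
  rw [card_filter_sumType (isYZ e k)]
  have h1 : (Finset.univ.filter fun f : NZ e => isYZ e k (Sum.inl f)).card = 0 := by
    rw [Finset.card_eq_zero]
    apply Finset.filter_false_of_mem
    intro f _
    exact fun h => h
  have h2 : (Finset.univ.filter fun j : Fin (k+1) => isYZ e k (Sum.inr j)).card = k := by
    have : (Finset.univ.filter fun j : Fin (k+1) => isYZ e k (Sum.inr j))
        = Finset.univ.filter fun j : Fin (k+1) => ¬ (j = 0) := by
      ext j
      simp only [Finset.mem_filter]
      exact and_congr_right fun _ => Iff.rfl
    rw [this]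
    have h3 : (Finset.univ.filter fun j : Fin (k+1) => ¬ (j = 0)) = Finset.univ.erase 0 := by
      ext j
      simp [Finset.mem_erase, and_comm]
    rw [h3, Finset.card_erase_of_mem (Finset.mem_univ 0), Finset.card_univ, Fintype.card_fin]
    omega
  rw [h1, h2]
  omega

lemma card_synShift (c : Fin e → ZMod 2) :
    (Finset.univ.filter fun f : NZ e => c + (f : Fin e → ZMod 2) ∈ S).card
      = (S.erase c).card := by
  have hinj : Set.InjOn (fun f : NZ e => c + (f : Fin e → ZMod 2))
      ↑(Finset.univ.filter fun f : NZ e => c + (f : Fin e → ZMod 2) ∈ S) := by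
    intro f _ g _ hfg
    exact Subtype.ext (add_left_cancel hfg)
  rw [← Finset.card_image_of_injOn hinj]
  congr 1
  ext x
  simp only [Finset.mem_image, Finset.mem_filter, Finset.mem_univ, true_and, Finset.mem_erase]
  constructor
  · rintro ⟨f, hf, rfl⟩
    refine ⟨?_, hf⟩
    intro hEq
    apply f.2
    have h2 : c + (f : Fin e → ZMod 2) = c + 0 := by rw [add_zero]; exact hEq
    exact add_left_cancel h2
  · rintro ⟨hxc, hxS⟩
    have hne : c + x ≠ 0 := by
      intro h0
      exact hxc ((z2v_add_eq_zero e c x).mp h0).symm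
    have hcx : c + ((⟨c + x, hne⟩ : NZ e) : Fin e → ZMod 2) = x := by
      show c + (c + x) = x
      rw [← add_assoc, (z2v_add_eq_zero e c c).mpr rfl, zero_add]
    exact ⟨⟨c + x, hne⟩, by rw [hcx]; exact hxS, hcx⟩

/-- The central count: the number of directions in which a vertex is the head. -/
lemma card_chi (hS : S.card = k) (v : Gam e k → ZMod 2) :
    (Finset.univ.filter (chi e k S v)).card = k ∨
    (Finset.univ.filter (chi e k S v)).card = 2 ^ e + k := by
  rcases z2_zero_or_one (pr e k v) with hp | hp
  · by_cases hx : isX e k S v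
    · left
      have : Finset.univ.filter (chi e k S v) = Finset.univ.filter (isYZ e k) := by
        ext γ
        simp only [Finset.mem_filter]
        apply and_congr_right
        intro _
        unfold chi
        rw [if_pos hp]
        constructor
        · intro h; rcases h with h | h
          · exact absurd hx h
          · exact h
        · intro h; right; exact h
      rw [this, card_isYZ]
    · right
      have : Finset.univ.filter (chi e k S v) = Finset.univ := by
        apply Finset.filter_true_of_mem
        intro γ _
        unfold chi
        rw [if_pos hp]
        left; exact hx
      rw [this, Finset.card_univ, card_gam]
  · left
    have hp0 : ¬ (pr e k v = 0) := by rw [hp]; decide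
    have hsplit : (Finset.univ.filter (chi e k S v)).card =
        (Finset.univ.filter fun f : NZ e => chi e k S v (Sum.inl f)).card +
        (Finset.univ.filter fun j : Fin (k+1) => chi e k S v (Sum.inr j)).card :=
      card_filter_sumType _
    have hL : (Finset.univ.filter fun f : NZ e => chi e k S v (Sum.inl f)).card
        = (S.erase (syn e k v)).card := by
      have hEq : (Finset.univ.filter fun f : NZ e => chi e k S v (Sum.inl f))
          = (Finset.univ.filter fun f : NZ e => syn e k v + (f : Fin e → ZMod 2) ∈ S) := by
        ext f
        simp only [Finset.mem_filter]
        apply and_congr_right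
        intro _
        unfold chi
        rw [if_neg hp0]
        unfold isX
        rw [pr_flip, hp, syn_flip_inl]
        constructor
        · intro h; exact h.1.2
        · intro h
          refine ⟨⟨by decide, h⟩, fun hyz => hyz⟩
      rw [hEq, card_synShift]
    have hR : (Finset.univ.filter fun j : Fin (k+1) => chi e k S v (Sum.inr j)).card
        = (if syn e k v ∈ S then 1 else 0) := by
      have hEq : (Finset.univ.filter fun j : Fin (k+1) => chi e k S v (Sum.inr j))
          = (Finset.univ.filter fun j : Fin (k+1) => j = 0 ∧ syn e k v ∈ S) := by
        ext j
        simp only [Finset.mem_filter]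
        apply and_congr_right
        intro _
        unfold chi
        rw [if_neg hp0]
        unfold isX isYZ
        rw [pr_flip, hp, syn_flip_inr]
        constructor
        · intro h
          have hj : j = 0 := by
            by_contra hj0
            exact h.2 hj0
          exact ⟨hj, h.1.2⟩
        · intro h
          refine ⟨⟨by decide, h.2⟩, ?_⟩
          intro hyz
          exact hyz h.1
      rw [hEq]
      by_cases hmem : syn e k v ∈ S
      · rw [if_pos hmem]
        have : (Finset.univ.filter fun j : Fin (k+1) => j = 0 ∧ syn e k v ∈ S)
            = {(0 : Fin (k+1))} := by
          ext j
          simp [hmem]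
        rw [this, Finset.card_singleton]
      · rw [if_neg hmem]
        rw [Finset.card_eq_zero]
        apply Finset.filter_false_of_mem
        intro j _
        exact fun h => hmem h.2
    rw [hsplit, hL, hR]
    by_cases hmem : syn e k v ∈ S
    · rw [if_pos hmem, Finset.card_erase_of_mem hmem, hS]
      have : 1 ≤ k := by
        rw [← hS]
        exact Finset.card_pos.mpr ⟨_, hmem⟩
      omega
    · rw [if_neg hmem, Finset.erase_eq_of_notMem hmem, hS]
      omega

/-- Block-parity projection from the blown-up cube to the base cube. -/
def piB (w : BI e m k → ZMod 2) : Gam e k → ZMod 2 := fun γ => ∑ r, w (γ, r)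

lemma piB_flip (w : BI e m k → ZMod 2) (γ : Gam e k) (r : Fin m) :
    piB e m k (flipG w (γ, r)) = flipG (piB e m k w) γ := by
  funext γ'
  by_cases hg : γ' = γ
  · subst hg
    show ∑ r', (flipG w (γ', r)) (γ', r') = flipG (piB e m k w) γ' γ'
    have hcomp : ∀ r' : Fin m, (flipG w (γ', r)) (γ', r')
        = Function.update (fun r'' : Fin m => w (γ', r'')) r (w (γ', r) + 1) r' := by
      intro r'
      have hinj : Function.Injective (fun r'' : Fin m => ((γ', r'') : BI e m k)) := by
        intro x y hxy
        exact (Prod.mk.injEq _ _ _ _).mp hxy |>.2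
      exact congrFun (Function.update_comp_eq_of_injective w hinj r _) r'
    have h1 : ∑ r', (flipG w (γ', r)) (γ', r')
        = ∑ r', Function.update (fun r'' : Fin m => w (γ', r'')) r (w (γ', r) + 1) r' :=
      Finset.sum_congr rfl fun r' _ => hcomp r'
    rw [h1, Finset.sum_update_of_mem (Finset.mem_univ r)]
    have h2 : ∑ x ∈ Finset.univ \ {r}, w (γ', x) = ∑ x ∈ Finset.univ.erase r, w (γ', x) := by
      rw [Finset.erase_eq]
    have h3 : w (γ', r) + ∑ x ∈ Finset.univ.erase r, w (γ', x) = ∑ x, w (γ', x) :=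
      Finset.add_sum_erase Finset.univ (fun x => w (γ', x)) (Finset.mem_univ r)
    rw [h2, flipG_apply_same]
    show _ = piB e m k w γ' + 1
    unfold piB
    rw [← h3]
    ring
  · show ∑ r', (flipG w (γ, r)) (γ', r') = flipG (piB e m k w) γ γ'
    rw [flipG_apply_ne _ hg]
    apply Finset.sum_congr rfl
    intro r' _
    apply flipG_apply_ne
    intro hEq
    exact hg (congrArg Prod.fst hEq)

/-- The blown-up boundary pre-orientation. -/
noncomputable def bPre : Pre (BI e m k) where
  μ := fun x w => w x + 1 + (if chi e k S (piB e m k w) x.1 then 1 else 0)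
  inv := by
    rintro ⟨γ, r⟩ w
    show (flipG w (γ, r)) (γ, r) + 1 + (if chi e k S (piB e m k (flipG w (γ, r))) γ then 1 else 0)
      = w (γ, r) + 1 + (if chi e k S (piB e m k w) γ then 1 else 0)
    rw [flipG_apply_same, piB_flip]
    have hiff := chi_flip e k S (piB e m k w) γ
    by_cases hc : chi e k S (piB e m k w) γ
    · rw [if_pos hc, if_neg (by rw [hiff]; exact fun h => h hc)]
      ring
    · rw [if_neg hc, if_pos (hiff.mpr hc)]
      have hz : ∀ u : ZMod 2, u + 1 + 1 + 1 = u + 1 + 0 := by decide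
      exact hz _

lemma card_filter_fst (p : Gam e k → Prop) :
    (Finset.univ.filter fun x : BI e m k => p x.1).card
      = (Finset.univ.filter p).card * m := by
  have h : (Finset.univ.filter fun x : BI e m k => p x.1)
      = (Finset.univ.filter p) ×ˢ (Finset.univ : Finset (Fin m)) := by
    ext ⟨γ, r⟩
    simp [Finset.mem_product]
  rw [h, Finset.card_product, Finset.card_univ, Fintype.card_fin]

lemma bPre_deg (hS : S.card = k) (w : BI e m k → ZMod 2) :
    (bPre e m k S).deg w = k * m ∨ (bPre e m k S).deg w = (2 ^ e + k) * m := by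
  have hcond : ∀ x : BI e m k, ((bPre e m k S).μ x w = w x) ↔ chi e k S (piB e m k w) x.1 := by
    intro x
    show (w x + 1 + (if chi e k S (piB e m k w) x.1 then 1 else 0) = w x) ↔ _
    by_cases hc : chi e k S (piB e m k w) x.1
    · rw [if_pos hc]
      constructor
      · intro _; exact hc
      · intro _
        have : ∀ u : ZMod 2, u + 1 + 1 = u := by decide
        exact this _
    · rw [if_neg hc]
      constructor
      · intro h
        exfalso
        have : ∀ u : ZMod 2, ¬ (u + 1 + 0 = u) := by decide
        exact this _ h
      · intro h; exact absurd h hc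
  have h1 : (bPre e m k S).deg w
      = (Finset.univ.filter fun x : BI e m k => chi e k S (piB e m k w) x.1).card := by
    unfold Pre.deg
    congr 1
    ext x
    simp only [Finset.mem_filter, hcond]
  rw [h1, card_filter_fst]
  rcases card_chi e k S hS (piB e m k w) with h | h
  · left; rw [h]
  · right; rw [h]

end boundary

/-! ### The full construction -/

lemma constr (n e m k q : ℕ) (hk : k ≤ 2 ^ e) (hn : n = m * (2 ^ e + k) + 2 * q) :
    ∃ o : CubeOrientation n,
      ∀ v, o.inDeg v = m * k + q ∨ o.inDeg v = m * (2 ^ e + k) + q := by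
  subst hn
  have hcard : k ≤ (Finset.univ : Finset (Fin e → ZMod 2)).card := by
    rw [Finset.card_univ, Fintype.card_fun]
    simpa using hk
  obtain ⟨S, _, hScard⟩ := Finset.exists_subset_card_eq hcard
  set P := (bPre e m k S).sum (constPre q) with hP
  have hce : Fintype.card (BI e m k ⊕ (Fin q ⊕ Fin q)) = m * (2 ^ e + k) + 2 * q := by
    have hbi : Fintype.card (BI e m k) = (2 ^ e + k) * m := by
      rw [Fintype.card_prod, card_gam, Fintype.card_fin]
    rw [Fintype.card_sum, hbi, Fintype.card_sum, Fintype.card_fin]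
    ring
  have φ : Fin (m * (2 ^ e + k) + 2 * q) ≃ (BI e m k ⊕ (Fin q ⊕ Fin q)) :=
    Fintype.equivOfCardEq (by rw [hce, Fintype.card_fin])
  refine ⟨P.toCube φ, ?_⟩
  intro v
  rw [Pre.toCube_inDeg, hP, Pre.sum_deg, constPre_deg]
  rcases bPre_deg e m k S hScard ((v ∘ ⇑φ.symm) ∘ Sum.inl) with h | h
  · left; rw [h]; ring
  · right; rw [h]; ring

/-! ### Forward direction: counting -/

lemma card_vertices (n : ℕ) : Fintype.card (Fin n → ZMod 2) = 2 ^ n := by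
  rw [Fintype.card_fun, ZMod.card, Fintype.card_fin]

lemma card_head_filter {n : ℕ} (hn : 0 < n) (o : CubeOrientation n) (i : Fin n) :
    (Finset.univ.filter fun v : Fin n → ZMod 2 => o.head v i = v).card = 2 ^ (n - 1) := by
  have hbij : (Finset.univ.filter fun v : Fin n → ZMod 2 => o.head v i = v).card
      = (Finset.univ.filter fun v : Fin n → ZMod 2 => ¬ (o.head v i = v)).card := by
    apply Finset.card_nbij (fun v => flipBit v i)
    · intro v hv
      simp only [Finset.mem_coe, Finset.mem_filter] at hv ⊢
      refine ⟨Finset.mem_univ _, ?_⟩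
      rw [o.compatible v i, hv.2]
      intro hEq
      exact flipG_ne v i hEq.symm
    · intro v _ w _ hvw
      have : flipG (flipG v i) i = flipG (flipG w i) i := by
        rw [show flipG v i = flipG w i from hvw]
      simpa using this
    · intro w hw
      simp only [Finset.mem_coe, Finset.mem_filter] at hw
      have hw2 : o.head w i = flipBit w i := by
        rcases o.head_mem w i with h | h
        · exact absurd h hw.2
        · exact h
      refine ⟨flipBit w i, ?_, by
        show flipBit (flipG w i) i = w
        rw [flipBit_eq_flipG, flipG_flipG]⟩
      simp only [Finset.mem_coe, Finset.mem_filter]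
      refine ⟨Finset.mem_univ _, ?_⟩
      rw [o.compatible w i, hw2]
  have hsum := Finset.card_filter_add_card_filter_not
    (s := (Finset.univ : Finset (Fin n → ZMod 2))) (fun v => o.head v i = v)
  rw [Finset.card_univ, card_vertices] at hsum
  have h2n : 2 ^ n = 2 ^ (n - 1) * 2 := by
    rw [← pow_succ, Nat.sub_add_cancel hn]
  omega

lemma sum_inDeg {n : ℕ} (hn : 0 < n) (o : CubeOrientation n) :
    ∑ v : Fin n → ZMod 2, o.inDeg v = n * 2 ^ (n - 1) := by
  have hterm : ∀ v : Fin n → ZMod 2,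
      o.inDeg v = ∑ i, if o.head v i = v then 1 else 0 := by
    intro v
    rw [CubeOrientation.inDeg, Finset.card_filter]
  calc ∑ v : Fin n → ZMod 2, o.inDeg v
      = ∑ v : Fin n → ZMod 2, ∑ i, if o.head v i = v then 1 else 0 :=
        Finset.sum_congr rfl fun v _ => hterm v
    _ = ∑ i, ∑ v : Fin n → ZMod 2, if o.head v i = v then 1 else 0 := Finset.sum_comm
    _ = ∑ i : Fin n, 2 ^ (n - 1) := by
        apply Finset.sum_congr rfl
        intro i _
        rw [← Finset.card_filter]
        exact card_head_filter hn o i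
    _ = n * 2 ^ (n - 1) := by
        rw [Finset.sum_const, Finset.card_univ, Fintype.card_fin, smul_eq_mul]

/-! ### The arithmetic wrapper (natural-number version) -/

lemma natCore (n A B s t : ℕ) (hn : 0 < n) (hAB : A ≤ B) (hBn : B ≤ n)
    (hnab : n ≤ A + B) (hst : s + t = 2 ^ n) (hval : A * s + B * t = n * 2 ^ (n - 1)) :
    ∃ o : CubeOrientation n, ∀ v, o.inDeg v = A ∨ o.inDeg v = B := by
  have h2n : 2 ^ n = 2 ^ (n - 1) * 2 := by
    rw [← pow_succ, Nat.sub_add_cancel hn]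
  have hP : 0 < 2 ^ (n - 1) := Nat.pow_pos (by omega)
  by_cases hABeq : A = B
  · -- constant case: n = 2A
    subst hABeq
    have h1 : A * 2 ^ n = n * 2 ^ (n - 1) := by
      rw [← hval, ← hst]
      ring
    have h2 : (2 * A) * 2 ^ (n - 1) = n * 2 ^ (n - 1) := by
      rw [← h1, h2n]
      ring
    have hn2A : n = 2 * A := (Nat.eq_of_mul_eq_mul_right hP h2).symm
    obtain ⟨o, ho⟩ := constr n 0 0 0 A (by norm_num) (by omega)
    refine ⟨o, fun v => ?_⟩
    rcases ho v with h | h <;> (left; simpa using h)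
  · have hABlt : A < B := lt_of_le_of_ne hAB hABeq
    obtain ⟨e, m, hmodd, hd⟩ := Nat.exists_eq_two_pow_mul_odd (n := B - A) (by omega)
    have hm0 : 0 < m := hmodd.pos
    have h2A : 2 * A ≤ n := by
      have hA1 : A * 2 ^ n ≤ n * 2 ^ (n - 1) := by
        calc A * 2 ^ n = A * s + A * t := by rw [← hst]; ring
          _ ≤ A * s + B * t := by
              have := Nat.mul_le_mul_right t hAB
              omega
          _ = n * 2 ^ (n - 1) := hval
      have hA2 : (2 * A) * 2 ^ (n - 1) ≤ n * 2 ^ (n - 1) := by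
        calc (2 * A) * 2 ^ (n - 1) = A * 2 ^ n := by rw [h2n]; ring
          _ ≤ n * 2 ^ (n - 1) := hA1
      exact Nat.le_of_mul_le_mul_right hA2 hP
    have hdt : (B - A) * t = 2 ^ (n - 1) * (n - 2 * A) := by
      zify [hAB, h2A]
      have hst' : (s : ℤ) + t = 2 ^ n := by exact_mod_cast hst
      have hval' : (A : ℤ) * s + B * t = n * 2 ^ (n - 1) := by exact_mod_cast hval
      have h2n' : (2 : ℤ) ^ n = 2 ^ (n - 1) * 2 := by exact_mod_cast h2n
      linear_combination hval' - (A : ℤ) * hst' - (A : ℤ) * h2n'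
    have hmBA : m ∣ B - A := Dvd.intro_left _ hd.symm
    have hmdvd : m ∣ n - 2 * A := by
      have h1 : m ∣ 2 ^ (n - 1) * (n - 2 * A) := hdt ▸ hmBA.trans (Dvd.intro t rfl)
      have hcop : Nat.Coprime m (2 ^ (n - 1)) := by
        apply Nat.Coprime.pow_right
        exact Nat.coprime_two_right.mpr hmodd
      exact hcop.dvd_of_dvd_mul_left h1
    have hmk : m ∣ A + B - n := by
      have heq : A + B - n = (B - A) - (n - 2 * A) := by omega
      rw [heq]
      exact Nat.dvd_sub hmBA hmdvd
    set k := (A + B - n) / m with hkdef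
    have hkm : m * k = A + B - n := Nat.mul_div_cancel' hmk
    have hme : m * 2 ^ e = 2 ^ e * m := Nat.mul_comm _ _
    have hk2e : k ≤ 2 ^ e := by
      have h1 : m * k ≤ m * 2 ^ e := by omega
      exact Nat.le_of_mul_le_mul_left h1 hm0
    set q := n - B with hqdef
    have hdist : m * (2 ^ e + k) = m * 2 ^ e + m * k := by ring
    have hneq : n = m * (2 ^ e + k) + 2 * q := by omega
    obtain ⟨o, ho⟩ := constr n e m k q hk2e hneq
    refine ⟨o, fun v => ?_⟩
    rcases ho v with h | h
    · left; rw [h]; omega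
    · right; rw [h]; omega

lemma natMain (n A B s t : ℕ) (hn : 0 < n) (hAB : A ≤ B) (hBn : B ≤ n)
    (hst : s + t = 2 ^ n) (hval : A * s + B * t = n * 2 ^ (n - 1)) :
    ∃ o : CubeOrientation n, ∀ v, o.inDeg v = A ∨ o.inDeg v = B := by
  by_cases hnab : n ≤ A + B
  · exact natCore n A B s t hn hAB hBn hnab hst hval
  · have hAn : A ≤ n := le_trans hAB hBn
    have h2n : 2 ^ n = 2 ^ (n - 1) * 2 := by
      rw [← pow_succ, Nat.sub_add_cancel hn]
    have hval' : (n - B) * t + (n - A) * s = n * 2 ^ (n - 1) := by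
      zify [hBn, hAn]
      have hst' : (s : ℤ) + t = 2 ^ n := by exact_mod_cast hst
      have hvalz : (A : ℤ) * s + B * t = n * 2 ^ (n - 1) := by exact_mod_cast hval
      have h2n' : (2 : ℤ) ^ n = 2 ^ (n - 1) * 2 := by exact_mod_cast h2n
      linear_combination (n : ℤ) * hst' - hvalz + (n : ℤ) * h2n'
    obtain ⟨o', ho'⟩ := natCore n (n - B) (n - A) t s hn (by omega) (by omega) (by omega)
      (by omega) hval'
    refine ⟨complO o', fun v => ?_⟩
    rw [complO_inDeg]
    have hle : o'.inDeg v ≤ n := by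
      rcases ho' v with h | h <;> omega
    rcases ho' v with h | h
    · right; omega
    · left; omega

end HyperAux

theorem hypercube_two_indegrees_iff (n : ℕ) (hn : 0 < n) (a b : ℤ)
    (ha0 : 0 ≤ a) (han : a ≤ n) (hb0 : 0 ≤ b) (hbn : b ≤ n) :
    (∃ o : CubeOrientation n, ∀ v, (o.inDeg v : ℤ) = a ∨ (o.inDeg v : ℤ) = b) ↔
      (∃ s t : ℕ, s + t = 2 ^ n ∧ a * s + b * t = n * 2 ^ (n - 1)) := by
  classical
  constructor
  · rintro ⟨o, ho⟩
    set F := Finset.univ.filter (fun v : Fin n → ZMod 2 => (o.inDeg v : ℤ) = a) with hF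
    have hcards : F.card + (Finset.univ.filter
        (fun v : Fin n → ZMod 2 => ¬ ((o.inDeg v : ℤ) = a))).card = 2 ^ n := by
      rw [hF, Finset.card_filter_add_card_filter_not, Finset.card_univ,
        HyperAux.card_vertices]
    refine ⟨F.card, 2 ^ n - F.card, by omega, ?_⟩
    have hsplit := Finset.sum_filter_add_sum_filter_not Finset.univ
      (fun v : Fin n → ZMod 2 => (o.inDeg v : ℤ) = a) (fun v => (o.inDeg v : ℤ))
    have hA : ∑ v ∈ F, (o.inDeg v : ℤ) = a * F.card := by
      have h1 : ∑ v ∈ F, (o.inDeg v : ℤ) = ∑ _v ∈ F, a :=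
        Finset.sum_congr rfl (fun v hv => (Finset.mem_filter.mp hv).2)
      rw [h1, Finset.sum_const, nsmul_eq_mul, mul_comm]
    have hB : ∑ v ∈ (Finset.univ.filter
        (fun v : Fin n → ZMod 2 => ¬ ((o.inDeg v : ℤ) = a))), (o.inDeg v : ℤ)
        = b * (2 ^ n - F.card : ℕ) := by
      have h1 : ∑ v ∈ (Finset.univ.filter
          (fun v : Fin n → ZMod 2 => ¬ ((o.inDeg v : ℤ) = a))), (o.inDeg v : ℤ)
          = ∑ _v ∈ (Finset.univ.filter
          (fun v : Fin n → ZMod 2 => ¬ ((o.inDeg v : ℤ) = a))), b := by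
        apply Finset.sum_congr rfl
        intro v hv
        have hv2 := (Finset.mem_filter.mp hv).2
        rcases ho v with h | h
        · exact absurd h hv2
        · exact h
      rw [h1, Finset.sum_const, nsmul_eq_mul, mul_comm]
      congr 1
      omega
    have htot : ∑ v : Fin n → ZMod 2, (o.inDeg v : ℤ) = (n : ℤ) * 2 ^ (n - 1) := by
      have := HyperAux.sum_inDeg hn o
      calc ∑ v : Fin n → ZMod 2, (o.inDeg v : ℤ)
          = ((∑ v : Fin n → ZMod 2, o.inDeg v : ℕ) : ℤ) := by push_cast; ring
        _ = (n : ℤ) * 2 ^ (n - 1) := by rw [this]; push_cast; ring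
    rw [hA, hB] at hsplit
    rw [← htot, ← hsplit]
  · rintro ⟨s, t, hst, hval⟩
    lift a to ℕ using ha0 with A
    lift b to ℕ using hb0 with B
    have hAn : A ≤ n := by exact_mod_cast han
    have hBn : B ≤ n := by exact_mod_cast hbn
    have hvalN : A * s + B * t = n * 2 ^ (n - 1) := by exact_mod_cast hval
    by_cases hAB : A ≤ B
    · obtain ⟨o, ho⟩ := HyperAux.natMain n A B s t hn hAB hBn hst hvalN
      refine ⟨o, fun v => ?_⟩
      rcases ho v with h | h
      · left; exact_mod_cast congrArg (Nat.cast : ℕ → ℤ) h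
      · right; exact_mod_cast congrArg (Nat.cast : ℕ → ℤ) h
    · have hBA : B ≤ A := le_of_not_ge hAB
      have hst' : t + s = 2 ^ n := by omega
      have hvalN' : B * t + A * s = n * 2 ^ (n - 1) := by linarith
      obtain ⟨o, ho⟩ := HyperAux.natMain n B A t s hn hBA hAn hst' hvalN'
      refine ⟨o, fun v => ?_⟩
      rcases ho v with h | h
      · right; exact_mod_cast congrArg (Nat.cast : ℕ → ℤ) h
      · left; exact_mod_cast congrArg (Nat.cast : ℕ → ℤ) h
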